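/- In a finite directed deadlock-free graph G (every node has a successor), a node r0 satisfies A[φ1 U φ2] if and only if the eventuality graph G(r0, φ2) is acyclic and every interior node of it satisfies φ1. -/

import Mathlib

private lemma rtg_path {V : Type*} {r : V → V → Prop} {a b : V}
    (h : Relation.ReflTransGen r a b) :
    ∃ (n : ℕ) (f : ℕ → V), f 0 = a ∧ f n = b ∧ ∀ i < n, r (f i) (f (i + 1)) := by
  induction h with
  | refl => exact ⟨0, fun _ => a, rfl, rfl, by omega⟩
  | @tail b c hab hbc ih =>
    obtain ⟨n, f, h0, hn, he⟩ := ih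
    refine ⟨n + 1, fun i => if i ≤ n then f i else c, by simp [h0], by simp, ?_⟩
    intro i hi
    rcases lt_or_eq_of_le (Nat.lt_succ_iff.mp hi) with h | h
    · simp only [Nat.le_of_lt h, if_pos, Nat.succ_le_of_lt h, if_pos]
      exact he i h
    · subst h
      simp only [le_refl, if_pos, Nat.lt_irrefl, Nat.not_succ_le_self, if_neg, hn]
      simpa [hn] using hbc

private lemma tg_cycle {V : Type*} {r : V → V → Prop} {x : V}
    (h : Relation.TransGen r x x) :
    ∃ (m : ℕ) (g : ℕ → V), 0 < m ∧ g 0 = x ∧ g m = x ∧ ∀ i < m, r (g i) (g (i + 1)) := by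
  obtain ⟨b, hb, hbx⟩ := Relation.TransGen.tail'_iff.mp h
  obtain ⟨n, f, h0, hn, he⟩ := rtg_path hb
  refine ⟨n + 1, fun i => if i ≤ n then f i else x, Nat.succ_pos n, by simp [h0], by simp, ?_⟩
  intro i hi
  rcases lt_or_eq_of_le (Nat.lt_succ_iff.mp hi) with h | h
  · simp only [Nat.le_of_lt h, if_pos, Nat.succ_le_of_lt h, if_pos]
    exact he i h
  · subst h
    simp only [le_refl, if_pos, Nat.not_succ_le_self, if_neg, hn]
    simpa [hn] using hbx

/-- In a finite deadlock-free directed graph, `r0 ⊨ A[φ1 U φ2]` (along every infinite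
path from `r0` there is a position where `φ2` holds with `φ1` at all earlier positions)
iff the eventuality graph `G(r0, φ2)` is acyclic and every interior node of it
satisfies `φ1`. -/
theorem stmt14 {V : Type*} [Fintype V] (E : V → V → Prop) (φ1 φ2 : V → Prop)
    (hdf : ∀ x : V, ∃ y : V, E x y) (r0 : V) :
    let Ee : V → V → Prop := fun a b => E a b ∧ ¬ φ2 a
    let nodes : Set V := {x | Relation.ReflTransGen Ee r0 x}
    ((∀ p : ℕ → V, p 0 = r0 → (∀ i : ℕ, E (p i) (p (i + 1))) →
        ∃ n : ℕ, φ2 (p n) ∧ ∀ i < n, φ1 (p i)) ↔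
      ((∀ x ∈ nodes, ¬ Relation.TransGen
          (fun a b => Ee a b ∧ a ∈ nodes ∧ b ∈ nodes) x x) ∧
       (∀ x ∈ nodes, (∃ y : V, Ee x y ∧ y ∈ nodes) → φ1 x))) := by
  intro Ee nodes
  classical
  have hclose : ∀ {x y : V}, x ∈ nodes → Ee x y → y ∈ nodes :=
    fun hx hxy => Relation.ReflTransGen.tail hx hxy
  constructor
  · intro hAU
    constructor
    · -- acyclicity
      rintro x hx hcyc
      obtain ⟨k, f, hf0, hfk, hfe⟩ := rtg_path (hx : Relation.ReflTransGen Ee r0 x)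
      have hcyc' : Relation.TransGen Ee x x := Relation.TransGen.mono (fun a b h => h.1) _ _ hcyc
      obtain ⟨m, g, hm, hg0, hgm, hge⟩ := tg_cycle hcyc'
      set p : ℕ → V := fun i => if i < k then f i else g ((i - k) % m) with hp
      have hp2 : ∀ i ≤ k, p i = f i := by
        intro i hi
        rcases lt_or_eq_of_le hi with h | h
        · simp [hp, h]
        · subst h
          simp [hp, Nat.sub_self, Nat.zero_mod, hg0, hfk]
      have hp3 : ∀ i, k ≤ i → p i = g ((i - k) % m) := by
        intro i hi
        rcases lt_or_eq_of_le hi with h | h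
        · simp [hp, Nat.not_lt.mpr hi]
        · subst h
          simp [hp, Nat.sub_self, Nat.zero_mod, hg0, hfk]
      have hgq : ∀ s : ℕ, Ee (g (s % m)) (g ((s + 1) % m)) := by
        intro s
        have ht : s % m < m := Nat.mod_lt _ hm
        have hmm : (s % m + 1) % m = (s + 1) % m := (Nat.mod_modEq s m).add_right 1
        rcases eq_or_lt_of_le (Nat.succ_le_of_lt ht) with h | h
        · have hsm : s % m + 1 = m := h
          have h0 : (s + 1) % m = 0 := by rw [← hmm, hsm, Nat.mod_self]
          rw [h0, hg0]
          have := hge _ ht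
          rwa [hsm, hgm] at this
        · have h1 : (s + 1) % m = s % m + 1 := by rw [← hmm, Nat.mod_eq_of_lt h]
          rw [h1]
          exact hge _ ht
      have hedge : ∀ i, Ee (p i) (p (i + 1)) := by
        intro i
        rcases Nat.lt_or_ge i k with h | h
        · rw [hp2 i (Nat.le_of_lt h), hp2 (i + 1) h]
          exact hfe i h
        · rw [hp3 i h, hp3 (i + 1) (by omega), show i + 1 - k = (i - k) + 1 by omega]
          exact hgq (i - k)
      obtain ⟨n, hn, -⟩ := hAU p (by rw [hp2 0 (Nat.zero_le k), hf0]) (fun i => (hedge i).1)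
      exact (hedge n).2 hn
    · -- interior nodes satisfy φ1
      rintro x hx ⟨y, hxy, -⟩
      obtain ⟨k, f, hf0, hfk, hfe⟩ := rtg_path (hx : Relation.ReflTransGen Ee r0 x)
      set c : V → V := fun v => (hdf v).choose with hcdef
      have hc : ∀ v, E v (c v) := fun v => (hdf v).choose_spec
      set ext : ℕ → V := fun t => Nat.rec x (fun _ ih => c ih) t with hextdef
      have hext0 : ext 0 = x := rfl
      have hexts : ∀ t, ext (t + 1) = c (ext t) := fun t => rfl
      set p : ℕ → V := fun i => if i ≤ k then f i else ext (i - k) with hp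
      have hp2 : ∀ i ≤ k, p i = f i := fun i hi => by simp [hp, hi]
      have hp3 : ∀ i, k ≤ i → p i = ext (i - k) := by
        intro i hi
        rcases lt_or_eq_of_le hi with h | h
        · simp [hp, Nat.not_le.mpr h]
        · subst h
          simp [hp, Nat.sub_self, hext0, hfk]
      have hedge : ∀ i, E (p i) (p (i + 1)) := by
        intro i
        rcases Nat.lt_or_ge i k with h | h
        · rw [hp2 i (Nat.le_of_lt h), hp2 (i + 1) h]
          exact (hfe i h).1
        · rw [hp3 i h, hp3 (i + 1) (by omega), show i + 1 - k = (i - k) + 1 by omega,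
            hexts]
          exact hc _
      obtain ⟨n, hn, hmin⟩ := hAU p (by rw [hp2 0 (Nat.zero_le k), hf0]) hedge
      have hnk : k < n := by
        by_contra hnk
        push_neg at hnk
        rcases lt_or_eq_of_le hnk with h | h
        · exact (hfe n h).2 (by rwa [hp2 n (Nat.le_of_lt h)] at hn)
        · subst h
          exact hxy.2 (by rwa [hp2 n le_rfl, hfk] at hn)
      have := hmin k hnk
      rwa [hp2 k le_rfl, hfk] at this
  · rintro ⟨hacyc, hint⟩ p hp0 hpe
    have hex : ∃ n, φ2 (p n) := by
      by_contra hno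
      push_neg at hno
      have hEe : ∀ i, Ee (p i) (p (i + 1)) := fun i => ⟨hpe i, hno i⟩
      have hmem : ∀ i, p i ∈ nodes := by
        intro i
        induction i with
        | zero => rw [hp0]; exact Relation.ReflTransGen.refl
        | succ j ih => exact hclose ih (hEe j)
      obtain ⟨i, j, hne, hij⟩ := Finite.exists_ne_map_eq_of_infinite p
      wlog hlt : i < j generalizing i j
      · exact this j i hne.symm hij.symm (by omega)
      have htg : ∀ d : ℕ, Relation.TransGen
          (fun a b => Ee a b ∧ a ∈ nodes ∧ b ∈ nodes) (p i) (p (i + d + 1)) := by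
        intro d
        induction d with
        | zero => exact Relation.TransGen.single ⟨hEe i, hmem i, hmem (i + 1)⟩
        | succ d ih => exact ih.tail ⟨hEe (i + d + 1), hmem _, hmem _⟩
      have := htg (j - i - 1)
      rw [show i + (j - i - 1) + 1 = j by omega, ← hij] at this
      exact hacyc (p i) (hmem i) this
    obtain ⟨n, hn2, hmin⟩ : ∃ n, φ2 (p n) ∧ ∀ i < n, ¬ φ2 (p i) :=
      ⟨Nat.find hex, Nat.find_spec hex, fun i hi => Nat.find_min hex hi⟩
    refine ⟨n, hn2, ?_⟩
    have hmem : ∀ j ≤ n, p j ∈ nodes := by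
      intro j
      induction j with
      | zero => intro _; rw [hp0]; exact Relation.ReflTransGen.refl
      | succ j ih =>
        intro hj
        exact hclose (ih (by omega)) ⟨hpe j, hmin j (by omega)⟩
    intro i hi
    exact hint (p i) (hmem i (Nat.le_of_lt hi))
      ⟨p (i + 1), ⟨hpe i, hmin i hi⟩, hmem (i + 1) hi⟩
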